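/- Let {K_1, ..., K_{d+1}} be a well separated family of compact connected sets in R^d. Then the family {conv(ℓ(K_1)), ..., conv(ℓ(K_{d+1}))} in R^{d+1}, where ℓ(x) = (x, |x|^2) is the paraboloid lifting, is well separated in R^{d+1}. -/

import Mathlib

open Set MeasureTheory

/-- The paraboloid lifting `ℓ(x) = (x, |x|²)`. -/
noncomputable def plift (d : ℕ) (x : EuclideanSpace ℝ (Fin d)) :
    EuclideanSpace ℝ (Fin (d + 1)) :=
  WithLp.toLp 2 fun i : Fin (d + 1) => if h : (i : ℕ) < d then x ⟨i, h⟩ else ‖x‖ ^ 2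

/-- The projection to the first `d` coordinates. -/
noncomputable def pproj (d : ℕ) (y : EuclideanSpace ℝ (Fin (d + 1))) :
    EuclideanSpace ℝ (Fin d) :=
  WithLp.toLp 2 fun i : Fin d => y i.castSucc

/-- The family `K` (in `ℝᵈ'`) is well separated: any points chosen from the convex hulls
of at most `d' + 1` of the members are affinely independent. -/
def WellSeparatedIn (d' : ℕ) {n : ℕ} (K : Fin n → Set (EuclideanSpace ℝ (Fin d'))) : Prop :=
  ∀ s : Finset (Fin n), s.card ≤ d' + 1 →
    ∀ x : Fin n → EuclideanSpace ℝ (Fin d'),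
      (∀ i ∈ s, x i ∈ convexHull ℝ (K i)) →
      AffineIndependent ℝ (fun i : s => x i)

/-- The projection as an affine map. -/
noncomputable def pprojA (d : ℕ) :
    EuclideanSpace ℝ (Fin (d + 1)) →ᵃ[ℝ] EuclideanSpace ℝ (Fin d) :=
  LinearMap.toAffineMap
    { toFun := pproj d
      map_add' := fun _ _ => rfl
      map_smul' := fun _ _ => rfl }

lemma pproj_plift (d : ℕ) (x : EuclideanSpace ℝ (Fin d)) : pprojA d (plift d x) = x := by
  ext i
  show plift d x i.castSucc = x i
  simp [plift, Fin.castSucc, Fin.is_lt]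

theorem stmt13 (d : ℕ) (K : Fin (d + 1) → Set (EuclideanSpace ℝ (Fin d)))
    (hcpt : ∀ i, IsCompact (K i)) (hconn : ∀ i, IsConnected (K i))
    (hws : WellSeparatedIn d K) :
    WellSeparatedIn (d + 1) (fun i => convexHull ℝ (plift d '' K i)) := by
  intro s _ x hx
  have hmem : ∀ i ∈ s, pprojA d (x i) ∈ convexHull ℝ (K i) := by
    intro i hi
    have h1 : x i ∈ convexHull ℝ (plift d '' K i) := by
      simpa [(convex_convexHull ℝ _).convexHull_eq] using hx i hi
    have h2 : pprojA d (x i) ∈ (pprojA d) '' (convexHull ℝ (plift d '' K i)) :=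
      Set.mem_image_of_mem _ h1
    rw [AffineMap.image_convexHull, Set.image_image] at h2
    simpa [pproj_plift] using h2
  have hcard : s.card ≤ d + 1 := by
    simpa using Finset.card_le_univ s
  have hai := hws s hcard (fun i => pprojA d (x i)) hmem
  exact hai.of_comp (f := pprojA d)
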